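/- arXiv:1303.4680 — 2 statements merged into one kernel-verified Lean document; each statement's English description precedes it below -/
import Mathlib

section
/- Let (R,𝔪,k) be a commutative Noetherian local ring with 𝔪 ≠ 0. Then ν^n_1(k) = 0 for all n ≥ 0; that is, the map Tor_1^R(k, R/𝔪^{n+1}) → Tor_1^R(k, R/𝔪^n) induced by the canonical surjection R/𝔪^{n+1} → R/𝔪^n is the zero map for every n ≥ 0. -/
open CategoryTheory IsLocalRing

/-- The map `ν^n_i(M) : Tor_i^R(M, R/𝔪^{n+1}) → Tor_i^R(M, R/𝔪^n)` induced by the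
canonical surjection `R/𝔪^{n+1} → R/𝔪^n`. -/
noncomputable def nuMap (R : Type) [CommRing R] [IsLocalRing R]
    (M : Type) [AddCommGroup M] [Module R M] (i n : ℕ) :
    ((Tor (ModuleCat R) i).obj (ModuleCat.of R M)).obj
        (ModuleCat.of R (R ⧸ (maximalIdeal R ^ (n + 1)))) ⟶
      ((Tor (ModuleCat R) i).obj (ModuleCat.of R M)).obj
        (ModuleCat.of R (R ⧸ (maximalIdeal R ^ n))) :=
  ((Tor (ModuleCat R) i).obj (ModuleCat.of R M)).map
    (ModuleCat.ofHom (Submodule.mapQ _ _ LinearMap.id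
      (by simpa using Ideal.pow_le_pow_right (by omega : n ≤ n + 1))))


open CategoryTheory CategoryTheory.Limits CategoryTheory.Projective

noncomputable section
namespace MyAux

variable {C : Type*} [Category C] [Abelian C] [EnoughProjectives C]

/-- Auxiliary complex for a projective resolution starting from a chosen epi. -/
def ofComplex' {P₀ Z : C} [Projective P₀] (ε : P₀ ⟶ Z) : ChainComplex C ℕ :=
  ChainComplex.mk' P₀ (Projective.syzygies ε) (Projective.d ε)
    (fun f => ⟨_, Projective.d f, by simp only [Projective.d]; exact (Category.assoc _ _ _).trans ((congrArg _ (kernel.condition f)).trans comp_zero)⟩)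

lemma ofComplex'_d_1_0 {P₀ Z : C} [Projective P₀] (ε : P₀ ⟶ Z) :
    (ofComplex' ε).d 1 0 = d ε := by
  simp [ofComplex']

lemma ofComplex'_exactAt_succ {P₀ Z : C} [Projective P₀] (ε : P₀ ⟶ Z) (n : ℕ) :
    (ofComplex' ε).ExactAt (n + 1) := by
  rw [HomologicalComplex.exactAt_iff' _ (n + 1 + 1) (n + 1) n (by simp) (by simp)]
  refine ShortComplex.exact_of_iso ?_ (exact_d_f ((ofComplex' ε).d (n + 1) n))
  refine ShortComplex.isoMk (ChainComplex.mk'XIso _ _ _ _ n : (ofComplex' ε).X (n + 1 + 1) ≅ _).symm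
    (Iso.refl _) (Iso.refl _) ?_ ?_
  · show _ ≫ (ofComplex' ε).d (n + 1 + 1) (n + 1) = d ((ofComplex' ε).d (n + 1) n) ≫ 𝟙 _
    unfold ofComplex'
    rw [ChainComplex.mk'_d]
    exact (Iso.inv_hom_id_assoc _ _).trans (Category.comp_id _).symm
  · show 𝟙 _ ≫ (ofComplex' ε).d (n + 1) n = (ofComplex' ε).d (n + 1) n ≫ 𝟙 _
    rw [Category.id_comp, Category.comp_id]

instance ofComplex'_projective {P₀ Z : C} [Projective P₀] (ε : P₀ ⟶ Z) (n : ℕ) :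
    Projective ((ofComplex' ε).X n) := by
  obtain (_ | _ | _ | n) := n
  · exact inferInstanceAs (Projective P₀)
  all_goals apply Projective.projective_over

/-- Projective resolution from a chosen epi from a projective object. -/
def ofEpi {P₀ Z : C} [Projective P₀] (ε : P₀ ⟶ Z) [Epi ε] : ProjectiveResolution Z where
  complex := ofComplex' ε
  π := (ChainComplex.toSingle₀Equiv _ _).symm ⟨ε, by
          rw [ofComplex'_d_1_0]; exact (Category.assoc _ _ _).trans ((congrArg _ (kernel.condition ε)).trans comp_zero)⟩
  quasiIso := ⟨fun n => by
    cases n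
    · rw [ChainComplex.quasiIsoAt₀_iff, ShortComplex.quasiIso_iff_of_zeros']
      · refine (ShortComplex.exact_and_epi_g_iff_of_iso ?_).2
          ⟨exact_d_f ε, by dsimp; infer_instance⟩
        exact ShortComplex.isoMk (Iso.refl _) (Iso.refl _) (Iso.refl _)
          (by show 𝟙 _ ≫ d ε = (ofComplex' ε).d 1 0 ≫ 𝟙 _; rw [Category.id_comp, Category.comp_id, ofComplex'_d_1_0])
          (by refine (Category.id_comp _).trans ?_; refine Eq.trans ?_ (Category.comp_id _).symm; exact (ChainComplex.toSingle₀Equiv_symm_apply_f_zero (C := ofComplex' ε) (X := Z) ε _).symm)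
      all_goals rfl
    · rw [quasiIsoAt_iff_exactAt']
      · apply ofComplex'_exactAt_succ
      · apply ChainComplex.exactAt_succ_single_obj⟩

@[simp] lemma ofEpi_complex_X_0 {P₀ Z : C} [Projective P₀] (ε : P₀ ⟶ Z) [Epi ε] :
    (ofEpi ε).complex.X 0 = P₀ := rfl

lemma ofEpi_π_f_0 {P₀ Z : C} [Projective P₀] (ε : P₀ ⟶ Z) [Epi ε] :
    (ofEpi ε).π.f 0 = ε := by
  exact ChainComplex.toSingle₀Equiv_symm_apply_f_zero _ _

end MyAux

open CategoryTheory CategoryTheory.Limits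

lemma homologyMap_eq_zero_of_f_eq_zero {C : Type*} [Category C] [Abelian C]
    {K L : HomologicalComplex C (ComplexShape.down ℕ)} (φ : K ⟶ L) (i : ℕ)
    (h : φ.f i = 0) : HomologicalComplex.homologyMap φ i = 0 := by
  have h1 : HomologicalComplex.cyclesMap φ i = 0 := by
    rw [← cancel_mono (L.iCycles i), HomologicalComplex.cyclesMap_i, h, comp_zero, zero_comp]
  rw [← cancel_epi (K.homologyπ i), HomologicalComplex.homologyπ_naturality, h1,
    zero_comp, comp_zero]

open IsLocalRing in
lemma lTensor_zero_of_range_le {R : Type} [CommRing R] [IsLocalRing R]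
    {A B : ModuleCat.{0} R} (f : A ⟶ B)
    (hf : LinearMap.range f.hom ≤ (maximalIdeal R) • (⊤ : Submodule R B)) :
    ((CategoryTheory.MonoidalCategory.tensoringLeft (ModuleCat R)).obj
        (ModuleCat.of R (R ⧸ maximalIdeal R))).map f = 0 := by
  apply ModuleCat.hom_ext
  apply TensorProduct.ext'
  intro x p
  have : (((CategoryTheory.MonoidalCategory.tensoringLeft (ModuleCat R)).obj
      (ModuleCat.of R (R ⧸ maximalIdeal R))).map f) (x ⊗ₜ[R] p)
      = x ⊗ₜ[R] f p := by
    exact ModuleCat.MonoidalCategory.whiskerLeft_apply _ f x p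
  rw [ModuleCat.hom_zero, LinearMap.zero_apply]
  refine this.trans ?_
  have hfp : f p ∈ (maximalIdeal R) • (⊤ : Submodule R B) := hf ⟨p, rfl⟩
  refine Submodule.smul_induction_on hfp (fun m hm b _ => ?_) (fun u v hu hv => ?_)
  · rw [TensorProduct.tmul_smul, TensorProduct.smul_tmul']
    have hx : m • x = (0 : R ⧸ maximalIdeal R) := by
      obtain ⟨r, rfl⟩ := Submodule.Quotient.mk_surjective _ x
      rw [← Submodule.Quotient.mk_smul, Submodule.Quotient.mk_eq_zero]
      exact Ideal.mul_mem_right r _ hm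
    rw [hx, TensorProduct.zero_tmul]
  · rw [TensorProduct.tmul_add, hu, hv, add_zero]

open IsLocalRing

namespace MyAux

variable {R : Type} [CommRing R] [IsLocalRing R]

/-- The quotient epi `R → R/I` in `ModuleCat R`. -/
def quotEpi (I : Ideal R) : ModuleCat.of R R ⟶ ModuleCat.of R (R ⧸ I) :=
  ModuleCat.ofHom (Submodule.mkQ I)

instance (I : Ideal R) : Epi (quotEpi I) :=
  (ModuleCat.epi_iff_surjective _).mpr (Submodule.mkQ_surjective _)

instance : Projective (ModuleCat.of R R) :=
  (IsProjective.iff_projective R).mp inferInstance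

/-- Our chosen resolution of `R/I`. -/
noncomputable def res (I : Ideal R) : ProjectiveResolution (ModuleCat.of R (R ⧸ I)) :=
  ofEpi (quotEpi I)

omit [IsLocalRing R] in
lemma res_π_f_0 (I : Ideal R) : (res I).π.f 0 = quotEpi I := ofEpi_π_f_0 _

lemma res_range_d_le (I : Ideal R) :
    LinearMap.range ((res I).complex.d 1 0).hom ≤ I := by
  rintro x ⟨y, rfl⟩
  have h := (res I).complex_d_comp_π_f_zero
  have h1 := congrArg (fun φ => ModuleCat.Hom.hom φ y) h
  have h2 : ((res I).π.f 0) (((res I).complex.d 1 0) y) = 0 := h1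
  rw [res_π_f_0] at h2
  exact (Submodule.Quotient.mk_eq_zero _).mp h2

lemma le_res_range_d (I : Ideal R) :
    (I : Submodule R R) ≤ LinearMap.range ((res I).complex.d 1 0).hom := by
  have h := (res I).exact₀.moduleCat_range_eq_ker
  refine le_trans (fun x hx => ?_) h.ge
  show ((res I).π.f 0) x = 0
  rw [res_π_f_0]
  exact (Submodule.Quotient.mk_eq_zero _).mpr hx

end MyAux

namespace MyAux

variable {R : Type} [CommRing R] [IsLocalRing R]

lemma exists_g1 (n : ℕ) :
    ∃ g₁ : ((res (maximalIdeal R ^ (n+1))).complex.X 1) ⟶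
        ((res (maximalIdeal R ^ n)).complex.X 1),
      g₁ ≫ (res (maximalIdeal R ^ n)).complex.d 1 0 =
        (res (maximalIdeal R ^ (n+1))).complex.d 1 0 ≫ 𝟙 (ModuleCat.of R R) ∧
      LinearMap.range g₁.hom ≤ (maximalIdeal R) •
        (⊤ : Submodule R ((res (maximalIdeal R ^ n)).complex.X 1)) := by
  set I : Ideal R := maximalIdeal R ^ (n+1) with hI
  set J : Ideal R := maximalIdeal R ^ n with hJ
  set dP : ((res I).complex.X 1) →ₗ[R] R := ((res (maximalIdeal R ^ (n+1))).complex.d 1 0).hom with hdP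
  set dQ : ((res J).complex.X 1) →ₗ[R] R := ((res (maximalIdeal R ^ n)).complex.d 1 0).hom with hdQ
  set W : Submodule R ((res J).complex.X 1) := (maximalIdeal R) • ⊤ with hW
  set τ : W →ₗ[R] R := dQ.comp W.subtype with hτdef
  have hrQ : LinearMap.range dQ = (J : Submodule R R) :=
    le_antisymm (res_range_d_le J) (le_res_range_d J)
  have hτ : LinearMap.range τ = (I : Submodule R R) := by
    rw [hτdef, LinearMap.range_comp, Submodule.range_subtype, hW,
      Submodule.map_smul'', Submodule.map_top, hrQ]
    rw [hI, hJ, Ideal.smul_eq_mul, ← pow_succ']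
  haveI hproj : Projective ((res I).complex.X 1) :=
    inferInstanceAs (Projective ((ofComplex' (quotEpi I)).X 1))
  haveI : Module.Projective R ((res I).complex.X 1) :=
    (IsProjective.iff_projective _).mpr
      (Projective.of_iso (Iso.refl _).symm hproj)
  have hle : ∀ x, dP x ∈ LinearMap.range τ := fun x => by
    rw [hτ]; exact res_range_d_le I ⟨x, rfl⟩
  obtain ⟨h, hh⟩ := Module.projective_lifting_property τ.rangeRestrict
    (LinearMap.codRestrict (LinearMap.range τ) dP hle)
    (LinearMap.surjective_rangeRestrict τ)
  refine ⟨ModuleCat.ofHom (W.subtype.comp h), ?_, ?_⟩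
  · refine ModuleCat.hom_ext (LinearMap.ext fun x => ?_)
    have h1 := DFunLike.congr_fun hh x
    have h2 := congrArg Subtype.val h1
    show dQ (W.subtype (h x)) = dP x
    exact h2
  · rintro _ ⟨x, rfl⟩
    exact (h x).2

end MyAux

namespace MyAux

variable {R : Type} [CommRing R] [IsLocalRing R]

/-- The canonical surjection `R/𝔪^{n+1} → R/𝔪^n` as a morphism in `ModuleCat R`. -/
noncomputable def nu (R : Type) [CommRing R] [IsLocalRing R] (n : ℕ) :
    ModuleCat.of R (R ⧸ (maximalIdeal R ^ (n + 1))) ⟶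
      ModuleCat.of R (R ⧸ (maximalIdeal R ^ n)) :=
  ModuleCat.ofHom (Submodule.mapQ _ _ LinearMap.id
    (by simpa using Ideal.pow_le_pow_right (by omega : n ≤ n + 1)))

/-- A chain map lifting `nu` whose degree-one component has range in `𝔪 • ⊤`. -/
noncomputable def gmap (n : ℕ) :
    (res (maximalIdeal R ^ (n+1))).complex ⟶ (res (maximalIdeal R ^ n)).complex :=
  ChainComplex.mkHom _ _ (𝟙 (ModuleCat.of R R)) (exists_g1 n).choose
    (exists_g1 n).choose_spec.1
    (fun m ⟨p, q, w⟩ =>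
      ⟨(ProjectiveResolution.liftFSucc (res (maximalIdeal R ^ (n+1)))
          (res (maximalIdeal R ^ n)) m p q w).1,
       (ProjectiveResolution.liftFSucc (res (maximalIdeal R ^ (n+1)))
          (res (maximalIdeal R ^ n)) m p q w).2⟩)

lemma gmap_f_1_range (n : ℕ) :
    LinearMap.range ((gmap (R := R) n).f 1).hom ≤ (maximalIdeal R) •
      (⊤ : Submodule R ((res (maximalIdeal R ^ n)).complex.X 1)) :=
  (exists_g1 n).choose_spec.2

lemma gmap_commutes (n : ℕ) :
    gmap n ≫ (res (maximalIdeal R ^ n)).π =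
      (res (maximalIdeal R ^ (n+1))).π ≫ (ChainComplex.single₀ (ModuleCat R)).map (nu R n) := by
  have hgf0 : (gmap (R := R) n).f 0 = 𝟙 (ModuleCat.of R R) := rfl
  have h1 : (gmap n ≫ (res (maximalIdeal R ^ n)).π).f 0 =
      (res (maximalIdeal R ^ n)).π.f 0 := by
    rw [HomologicalComplex.comp_f, hgf0]
    exact CategoryTheory.Category.id_comp _
  have h2 : ((res (maximalIdeal R ^ (n+1))).π ≫
        (ChainComplex.single₀ (ModuleCat R)).map (nu R n)).f 0 =
      (res (maximalIdeal R ^ (n+1))).π.f 0 ≫ nu R n := by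
    rw [HomologicalComplex.comp_f, ChainComplex.single₀_map_f_zero]
    rfl
  ext x
  rw [h1, h2, res_π_f_0, res_π_f_0]
  refine Eq.symm ?_
  exact Submodule.mapQ_apply (p := ((maximalIdeal R ^ (n+1) : Ideal R) : Submodule R R))
    (q := ((maximalIdeal R ^ n : Ideal R) : Submodule R R)) LinearMap.id
    (h := by simpa using Ideal.pow_le_pow_right (by omega : n ≤ n + 1)) (1 : R)

end MyAux

open CategoryTheory IsLocalRing

/-- `ν^n_1(k) = 0` for all `n ≥ 0`. -/
theorem nu_one_eq_zero (R : Type) [CommRing R] [IsLocalRing R] [IsNoetherianRing R]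
    (hm : maximalIdeal R ≠ ⊥) (n : ℕ) :
    nuMap R (R ⧸ maximalIdeal R) 1 n = 0 := by
  set F := (MonoidalCategory.tensoringLeft (ModuleCat R)).obj
    (ModuleCat.of R (R ⧸ maximalIdeal R)) with hF
  have key : nuMap R (R ⧸ maximalIdeal R) 1 n =
      (Functor.leftDerived F 1).map (MyAux.nu R n) := rfl
  rw [key, Functor.leftDerived_map_eq F 1 (MyAux.nu R n) (MyAux.gmap n)
    (MyAux.gmap_commutes n)]
  have hf1 : F.map ((MyAux.gmap (R := R) n).f 1) = 0 :=
    lTensor_zero_of_range_le _ (MyAux.gmap_f_1_range n)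
  have hzero : (F.mapHomologicalComplex (ComplexShape.down ℕ) ⋙
      HomologicalComplex.homologyFunctor (ModuleCat R) (ComplexShape.down ℕ) 1).map
        (MyAux.gmap (R := R) n) = 0 := by
    refine homologyMap_eq_zero_of_f_eq_zero _ 1 ?_
    exact hf1
  rw [hzero, Limits.zero_comp, Limits.comp_zero]
  rfl
end
end

section
/- Let (R,𝔪,k) be a commutative Noetherian local ring with 𝔪 ≠ 0 and let x ∈ 𝔪 ∖ 𝔪^2 be a strictly regular element, i.e. x is a nonzerodivisor on R whose initial form is a nonzerodivisor on gr_𝔪(R) (equivalently, x is a nonzerodivisor and (𝔪^{n+1} : x) ⊆ 𝔪^n for all n ≥ 0). Then ld_R(k) = ld_{R/(x)}(k). -/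
open CategoryTheory IsLocalRing

/-- A minimal free resolution `⋯ → F_{i+1} → F_i → ⋯ → F_0 → M → 0` of an `R`-module `M`
by finitely generated free `R`-modules `F_i = R^{rk i}`, with `∂(F_{i+1}) ⊆ 𝔪 F_i`. -/
structure MinFreeRes (R : Type) [CommRing R] [IsLocalRing R]
    (M : Type) [AddCommGroup M] [Module R M] where
  rk : ℕ → ℕ
  d : ∀ i : ℕ, (Fin (rk (i + 1)) → R) →ₗ[R] (Fin (rk i) → R)
  aug : (Fin (rk 0) → R) →ₗ[R] M
  aug_surj : Function.Surjective aug
  exact_aug : Function.Exact (d 0) aug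
  exact : ∀ i : ℕ, Function.Exact (d (i + 1)) (d i)
  minimal : ∀ i : ℕ, LinearMap.range (d i) ≤ (maximalIdeal R) • ⊤

/-- The submodule `𝔪^s F_i` of the `i`-th module of a minimal free resolution. -/
def MinFreeRes.pw {R : Type} [CommRing R] [IsLocalRing R]
    {M : Type} [AddCommGroup M] [Module R M] (F : MinFreeRes R M) (s i : ℕ) :
    Submodule R (Fin (F.rk i) → R) :=
  (maximalIdeal R) ^ s • ⊤

/-- Vanishing of the homology of the linear part `lin^R(F)` of a minimal free resolution `F`
in homological degree `i` (in all internal degrees), expressed elementwise (with the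
convention `𝔪^{-1} = R`). -/
def MinFreeRes.linHZero {R : Type} [CommRing R] [IsLocalRing R]
    {M : Type} [AddCommGroup M] [Module R M] (F : MinFreeRes R M) : ℕ → Prop
  | 0 => ∀ s : ℕ, ∀ x : Fin (F.rk 0) → R, x ∈ F.pw s 0 →
      ∃ y ∈ F.pw (s - 1) 1, x - F.d 0 y ∈ F.pw (s + 1) 0
  | (j + 1) => ∀ s : ℕ, ∀ x : Fin (F.rk (j + 1)) → R, x ∈ F.pw s (j + 1) →
      F.d j x ∈ F.pw (s + 2) j →
      ∃ y ∈ F.pw (s - 1) (j + 2), x - F.d (j + 1) y ∈ F.pw (s + 1) (j + 1)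

/-- The linearity defect `ld_R(M) = sup { i | H_i(lin^R(F)) ≠ 0 }`, computed from a minimal
free resolution `F` of `M`. -/
noncomputable def MinFreeRes.ldefect {R : Type} [CommRing R] [IsLocalRing R]
    {M : Type} [AddCommGroup M] [Module R M] (F : MinFreeRes R M) : ℕ∞ :=
  sSup ((fun i : ℕ => (i : ℕ∞)) '' {i : ℕ | ¬ F.linHZero i})

namespace Ld17


variable {R : Type} [CommRing R]

lemma pi_eq_sum_single {n : ℕ} (v : Fin n → R) :
    v = ∑ j, (v j) • (Pi.single j 1 : Fin n → R) := by
  funext k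
  simp [Pi.single_apply, Finset.sum_apply]

lemma mem_smul_top_pi {n : ℕ} {I : Ideal R} {v : Fin n → R} :
    v ∈ (I • ⊤ : Submodule R (Fin n → R)) ↔ ∀ k, v k ∈ I := by
  constructor
  · intro hv k
    refine Submodule.smul_induction_on hv (fun r hr m _ => ?_) (fun a b ha hb => ?_)
    · exact Ideal.mul_mem_right _ _ hr
    · exact Ideal.add_mem _ ha hb
  · intro h
    rw [pi_eq_sum_single v]
    exact Submodule.sum_mem _ fun k _ =>
      Submodule.smul_mem_smul (h k) Submodule.mem_top

lemma mem_smul_top_prod {M N : Type} [AddCommGroup M] [AddCommGroup N] [Module R M]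
    [Module R N] {I : Ideal R} {w : M × N} :
    w ∈ (I • ⊤ : Submodule R (M × N)) ↔
      w.1 ∈ (I • ⊤ : Submodule R M) ∧ w.2 ∈ (I • ⊤ : Submodule R N) := by
  constructor
  · intro hw
    refine Submodule.smul_induction_on hw (fun r hr m _ => ?_) (fun a b ha hb => ?_)
    · exact ⟨Submodule.smul_mem_smul hr Submodule.mem_top,
        Submodule.smul_mem_smul hr Submodule.mem_top⟩
    · exact ⟨Submodule.add_mem _ ha.1 hb.1, Submodule.add_mem _ ha.2 hb.2⟩
  · rintro ⟨h1, h2⟩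
    have e : w = ((w.1, 0) : M × N) + (0, w.2) := by simp
    rw [e]
    refine Submodule.add_mem _ ?_ ?_
    · have hmap := Submodule.map_smul'' I (⊤ : Submodule R M) (LinearMap.inl R M N)
      have hm : (LinearMap.inl R M N) w.1 ∈ Submodule.map (LinearMap.inl R M N) (I • ⊤) :=
        Submodule.mem_map_of_mem h1
      rw [hmap] at hm
      have : I • Submodule.map (LinearMap.inl R M N) ⊤ ≤
          (I • ⊤ : Submodule R (M × N)) := smul_mono_right I le_top
      exact this hm
    · have hmap := Submodule.map_smul'' I (⊤ : Submodule R N) (LinearMap.inr R M N)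
      have hm : (LinearMap.inr R M N) w.2 ∈ Submodule.map (LinearMap.inr R M N) (I • ⊤) :=
        Submodule.mem_map_of_mem h2
      rw [hmap] at hm
      have : I • Submodule.map (LinearMap.inr R M N) ⊤ ≤
          (I • ⊤ : Submodule R (M × N)) := smul_mono_right I le_top
      exact this hm

lemma apply_mem_smul_top {M N : Type} [AddCommGroup M] [AddCommGroup N] [Module R M]
    [Module R N] (f : M →ₗ[R] N) {I : Ideal R} {v : M}
    (h : v ∈ (I • ⊤ : Submodule R M)) : f v ∈ (I • ⊤ : Submodule R N) := by
  have hm : f v ∈ Submodule.map f (I • ⊤) := Submodule.mem_map_of_mem h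
  rw [Submodule.map_smul''] at hm
  have : I • Submodule.map f ⊤ ≤ (I • ⊤ : Submodule R N) := smul_mono_right I le_top
  exact this hm

lemma smul_top_mono {M : Type} [AddCommGroup M] [Module R M] {I J : Ideal R} (h : I ≤ J) :
    (I • ⊤ : Submodule R M) ≤ J • ⊤ :=
  Submodule.smul_mono_left h

lemma pow_smul_top_mono {M : Type} [AddCommGroup M] [Module R M] (I : Ideal R) {a b : ℕ}
    (h : b ≤ a) : (I ^ a • ⊤ : Submodule R M) ≤ I ^ b • ⊤ :=
  smul_top_mono (Ideal.pow_le_pow_right h)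

lemma mem_pow_zero_smul_top {M : Type} [AddCommGroup M] [Module R M] (I : Ideal R) (v : M) :
    v ∈ (I ^ 0 • ⊤ : Submodule R M) := by
  simp [Ideal.one_eq_top, Submodule.top_smul]

/-- applying a linear map between pi types as a sum over basis images -/
lemma lin_apply_eq_sum {n m : ℕ} (f : (Fin n → R) →ₗ[R] (Fin m → R)) (v : Fin n → R) :
    f v = ∑ j, v j • f (Pi.single j 1) := by
  conv_lhs => rw [pi_eq_sum_single v]
  rw [map_sum]
  exact Finset.sum_congr rfl fun j _ => by rw [map_smul]

/-- if `f` sends basis vectors into `J•⊤` then it maps `I•⊤` into `(I*J)•⊤`. -/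
lemma apply_mem_mul_smul_top {n m : ℕ} (f : (Fin n → R) →ₗ[R] (Fin m → R))
    {I J : Ideal R} (hf : ∀ j, f (Pi.single j 1) ∈ (J • ⊤ : Submodule R (Fin m → R)))
    {v : Fin n → R} (hv : v ∈ (I • ⊤ : Submodule R (Fin n → R))) :
    f v ∈ ((I * J) • ⊤ : Submodule R (Fin m → R)) := by
  rw [mem_smul_top_pi] at hv
  rw [mem_smul_top_pi]
  intro k
  rw [lin_apply_eq_sum]
  simp only [Finset.sum_apply, Pi.smul_apply, smul_eq_mul]
  refine Ideal.sum_mem _ fun j _ => Ideal.mul_mem_mul (hv j) ?_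
  exact (mem_smul_top_pi.mp (hf j)) k

/-- the pow-successor version -/
lemma apply_mem_pow_succ_smul_top {n m : ℕ} (f : (Fin n → R) →ₗ[R] (Fin m → R))
    {I : Ideal R} (hf : ∀ j, f (Pi.single j 1) ∈ (I • ⊤ : Submodule R (Fin m → R)))
    {s : ℕ} {v : Fin n → R} (hv : v ∈ (I ^ s • ⊤ : Submodule R (Fin n → R))) :
    f v ∈ (I ^ (s+1) • ⊤ : Submodule R (Fin m → R)) := by
  rw [pow_succ]
  exact apply_mem_mul_smul_top f hf hv



/-- sup equality from tail-boundedness equivalence -/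
lemma sSup_image_le_of_tail {SF SG : Set ℕ}
    (h : ∀ d : ℕ, (∀ i ∈ SG, i ≤ d) → (∀ i ∈ SF, i ≤ d)) :
    sSup ((fun i : ℕ => (i : ℕ∞)) '' SF) ≤ sSup ((fun i : ℕ => (i : ℕ∞)) '' SG) := by
  apply sSup_le
  rintro _ ⟨i, hi, rfl⟩
  by_contra hlt
  push_neg at hlt
  rcases i with _ | i'
  · exact absurd (by simpa using (zero_le (sSup ((fun i : ℕ => (i : ℕ∞)) '' SG)))) (not_le.mpr hlt)
  · have hbound : ∀ j ∈ SG, j ≤ i' := by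
      intro j hj
      have hle : (j : ℕ∞) ≤ sSup ((fun i : ℕ => (i : ℕ∞)) '' SG) :=
        le_sSup ⟨j, hj, rfl⟩
      have : (j : ℕ∞) < ((i' + 1 : ℕ) : ℕ∞) := lt_of_le_of_lt hle hlt
      have := Nat.cast_lt (α := ℕ∞) |>.mp this
      omega
    have := h i' hbound _ hi
    omega

lemma sSup_image_eq_of_tail {SF SG : Set ℕ}
    (h : ∀ d : ℕ, (∀ i ∈ SF, i ≤ d) ↔ (∀ i ∈ SG, i ≤ d)) :
    sSup ((fun i : ℕ => (i : ℕ∞)) '' SF) = sSup ((fun i : ℕ => (i : ℕ∞)) '' SG) :=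
  le_antisymm (sSup_image_le_of_tail fun d => (h d).mpr)
    (sSup_image_le_of_tail fun d => (h d).mp)

/-- generic dependent recursive choice along a chain of relations -/
lemma exists_seq {α : ℕ → Sort*} (r : ∀ i, α i → α (i+1) → Prop)
    (a : α 0) (b : α 1) (hab : r 0 a b)
    (step : ∀ i (u : α i) (v : α (i+1)), r i u v → ∃ w, r (i+1) v w) :
    ∃ f : ∀ i, α i, f 0 = a ∧ ∀ i, r i (f i) (f (i+1)) := by
  choose next hnext using step
  let g : ∀ i, Σ' (p : PProd (α i) (α (i+1))), r i p.1 p.2 := fun i =>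
    Nat.rec (⟨⟨a, b⟩, hab⟩ : Σ' (p : PProd (α 0) (α 1)), r 0 p.1 p.2)
      (fun i prev => ⟨⟨prev.1.2, next i prev.1.1 prev.1.2 prev.2⟩,
        hnext i prev.1.1 prev.1.2 prev.2⟩) i
  refine ⟨fun i => (g i).1.1, rfl, fun i => ?_⟩
  exact (g i).2


/-- lifting through a map whose range contains the range of `g`, from a projective module -/
lemma lift_through {M Y Z : Type} [AddCommGroup M] [Module R M] [Module.Projective R M]
    [AddCommGroup Y] [Module R Y] [AddCommGroup Z] [Module R Z]
    (g : M →ₗ[R] Y) (p : Z →ₗ[R] Y) (h : ∀ v, ∃ u, p u = g v) :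
    ∃ f : M →ₗ[R] Z, ∀ v, p (f v) = g v := by
  have hr : ∀ v, g v ∈ LinearMap.range p := fun v => by
    obtain ⟨u, hu⟩ := h v; exact ⟨u, hu⟩
  let g' : M →ₗ[R] LinearMap.range p := g.codRestrict _ hr
  obtain ⟨f, hf⟩ := Module.projective_lifting_property p.rangeRestrict g'
    (LinearMap.surjective_rangeRestrict p)
  refine ⟨f, fun v => ?_⟩
  have := congrArg (fun (t : M →ₗ[R] LinearMap.range p) => ((t v : LinearMap.range p) : Y)) hf
  simpa [g'] using this

/-- An augmented resolution by projective modules. -/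
structure AugRes (R : Type) [CommRing R] (k : Type) [AddCommGroup k] [Module R k] where
  Mo : ℕ → Type
  [acg : ∀ i, AddCommGroup (Mo i)]
  [mod : ∀ i, Module R (Mo i)]
  [proj : ∀ i, Module.Projective R (Mo i)]
  d : ∀ i, Mo (i+1) →ₗ[R] Mo i
  aug : Mo 0 →ₗ[R] k
  aug_surj : Function.Surjective aug
  exact_aug : ∀ v, aug v = 0 ↔ ∃ u, d 0 u = v
  exact : ∀ i (v : Mo (i+1)), d i v = 0 ↔ ∃ u, d (i+1) u = v

attribute [instance] AugRes.acg AugRes.mod AugRes.proj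

variable {k : Type} [AddCommGroup k] [Module R k]

lemma AugRes.aug_d (P : AugRes R k) (u : P.Mo 1) : P.aug (P.d 0 u) = 0 :=
  (P.exact_aug _).mpr ⟨u, rfl⟩

lemma AugRes.d_d (P : AugRes R k) (i : ℕ) (u : P.Mo (i+2)) : P.d i (P.d (i+1) u) = 0 :=
  (P.exact i _).mpr ⟨u, rfl⟩

/-- existence of a chain map between two augmented resolutions over the same module -/
lemma AugRes.exists_chainMap (P Q : AugRes R k) :
    ∃ φ : ∀ i, P.Mo i →ₗ[R] Q.Mo i,
      (∀ v, Q.aug (φ 0 v) = P.aug v) ∧ (∀ i v, Q.d i (φ (i+1) v) = φ i (P.d i v)) := by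
  obtain ⟨φ0, hφ0⟩ := lift_through P.aug Q.aug (fun v => Q.aug_surj (P.aug v))
  obtain ⟨φ1, hφ1⟩ := lift_through (φ0 ∘ₗ P.d 0) (Q.d 0) (fun v => by
    refine (Q.exact_aug _).mp ?_
    simp only [LinearMap.comp_apply]
    rw [hφ0]
    exact (P.exact_aug _).mpr ⟨v, rfl⟩)
  have step : ∀ i (u : P.Mo (i+1) →ₗ[R] Q.Mo (i+1)) (v : P.Mo (i+2) →ₗ[R] Q.Mo (i+2)),
      (∀ w, Q.d (i+1) (v w) = u (P.d (i+1) w)) →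
      ∃ z : P.Mo (i+3) →ₗ[R] Q.Mo (i+3), ∀ w, Q.d (i+2) (z w) = v (P.d (i+2) w) := by
    intro i u v huv
    obtain ⟨z, hz⟩ := lift_through (v ∘ₗ P.d (i+2)) (Q.d (i+2)) (fun w => by
      refine (Q.exact (i+1) _).mp ?_
      simp only [LinearMap.comp_apply]
      rw [huv, P.d_d, map_zero])
    exact ⟨z, fun w => by simpa using hz w⟩
  -- build φ2 to get started
  obtain ⟨φ2, hφ2⟩ := lift_through (φ1 ∘ₗ P.d 1) (Q.d 1) (fun v => by
    refine (Q.exact 0 _).mp ?_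
    simp only [LinearMap.comp_apply]
    rw [hφ1]
    simp only [LinearMap.comp_apply]
    rw [P.d_d, map_zero])
  obtain ⟨f, hf0, hf⟩ := exists_seq
    (r := fun i (u : P.Mo (i+1) →ₗ[R] Q.Mo (i+1)) (v : P.Mo (i+2) →ₗ[R] Q.Mo (i+2)) =>
      ∀ w, Q.d (i+1) (v w) = u (P.d (i+1) w))
    φ1 φ2 (fun w => by simpa using hφ2 w) step
  refine ⟨fun i => Nat.rec φ0 (fun j _ => f j) i, hφ0, fun i v => ?_⟩
  cases i with
  | zero => simpa [hf0] using hφ1 v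
  | succ j => exact hf j v


/-- existence of a chain homotopy between an augmentation-compatible chain self-map
and the identity -/
lemma AugRes.exists_homotopy (P : AugRes R k) (θ : ∀ i, P.Mo i →ₗ[R] P.Mo i)
    (haug : ∀ v, P.aug (θ 0 v) = P.aug v)
    (hcomm : ∀ i v, P.d i (θ (i+1) v) = θ i (P.d i v)) :
    ∃ h : ∀ i, P.Mo i →ₗ[R] P.Mo (i+1),
      (∀ v, P.d 0 (h 0 v) = θ 0 v - v) ∧
      (∀ i v, P.d (i+1) (h (i+1) v) = θ (i+1) v - v - h i (P.d i v)) := by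
  obtain ⟨h0, hh0⟩ := lift_through (θ 0 - LinearMap.id) (P.d 0) (fun v => by
    refine (P.exact_aug _).mp ?_
    simp only [LinearMap.sub_apply, LinearMap.id_apply, map_sub]
    rw [haug, sub_self])
  obtain ⟨h1, hh1⟩ := lift_through (θ 1 - LinearMap.id - h0 ∘ₗ P.d 0) (P.d 1) (fun v => by
    refine (P.exact 0 _).mp ?_
    simp only [LinearMap.sub_apply, LinearMap.id_apply, LinearMap.comp_apply, map_sub]
    rw [hcomm, hh0]
    simp only [LinearMap.sub_apply, LinearMap.id_apply]
    abel)
  have step : ∀ i (u : P.Mo i →ₗ[R] P.Mo (i+1)) (v : P.Mo (i+1) →ₗ[R] P.Mo (i+2)),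
      (∀ w, P.d (i+1) (v w) = θ (i+1) w - w - u (P.d i w)) →
      ∃ z : P.Mo (i+2) →ₗ[R] P.Mo (i+3),
        ∀ w, P.d (i+2) (z w) = θ (i+2) w - w - v (P.d (i+1) w) := by
    intro i u v huv
    obtain ⟨z, hz⟩ := lift_through (θ (i+2) - LinearMap.id - v ∘ₗ P.d (i+1)) (P.d (i+2))
      (fun w => by
        refine (P.exact (i+1) _).mp ?_
        simp only [LinearMap.sub_apply, LinearMap.id_apply, LinearMap.comp_apply, map_sub]
        rw [hcomm, huv, P.d_d, map_zero]
        abel)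
    exact ⟨z, fun w => by simpa using hz w⟩
  obtain ⟨f, hf0, hf⟩ := exists_seq
    (r := fun i (u : P.Mo i →ₗ[R] P.Mo (i+1)) (v : P.Mo (i+1) →ₗ[R] P.Mo (i+2)) =>
      ∀ w, P.d (i+1) (v w) = θ (i+1) w - w - u (P.d i w))
    h0 h1 (fun w => by simpa using hh1 w) step
  refine ⟨f, fun v => ?_, fun i v => hf i v⟩
  rw [hf0]
  simpa using hh0 v

/-- the elementwise ν-condition: any element whose boundary lies in `𝔪^{n+1}` is,
modulo a boundary, in `𝔪^n`. -/
def nuA [IsLocalRing R] (P : AugRes R k) (j n : ℕ) : Prop :=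
  ∀ z : P.Mo (j+1),
    P.d j z ∈ (maximalIdeal R ^ (n+1) • ⊤ : Submodule R (P.Mo j)) →
    ∃ y, z - P.d (j+1) y ∈ (maximalIdeal R ^ n • ⊤ : Submodule R (P.Mo (j+1)))

/-- the ν-condition transfers along comparison of augmented resolutions. -/
lemma nuA_transfer [IsLocalRing R] (P Q : AugRes R k) (j n : ℕ)
    (h : nuA Q j n) : nuA P j n := by
  obtain ⟨φ, hφaug, hφ⟩ := AugRes.exists_chainMap P Q
  obtain ⟨ψ, hψaug, hψ⟩ := AugRes.exists_chainMap Q P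
  obtain ⟨ho, hho0, hho⟩ := P.exists_homotopy (fun i => (ψ i) ∘ₗ (φ i))
    (fun v => by simp only [LinearMap.comp_apply]; rw [hψaug, hφaug])
    (fun i v => by simp only [LinearMap.comp_apply]; rw [hψ, hφ])
  intro z hz
  have h1 : Q.d j (φ (j+1) z) ∈ (maximalIdeal R ^ (n+1) • ⊤ : Submodule R (Q.Mo j)) := by
    rw [hφ]
    exact apply_mem_smul_top (φ j) hz
  obtain ⟨y, hy⟩ := h (φ (j+1) z) h1
  refine ⟨ψ (j+2) y - ho (j+1) z, ?_⟩
  have key : z - P.d (j+1) (ψ (j+2) y - ho (j+1) z)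
      = ψ (j+1) (φ (j+1) z - Q.d (j+1) y) - ho j (P.d j z) := by
    have e1 : P.d (j+1) (ho (j+1) z) = ψ (j+1) (φ (j+1) z) - z - ho j (P.d j z) := by
      simpa using hho j z
    have e2 : P.d (j+1) (ψ (j+2) y) = ψ (j+1) (Q.d (j+1) y) := hψ (j+1) y
    rw [map_sub, e1, e2, map_sub]
    abel
  rw [key]
  refine Submodule.sub_mem _ (apply_mem_smul_top _ hy) ?_
  exact pow_smul_top_mono _ (Nat.le_succ n) (apply_mem_smul_top _ hz)

/-- repackage a minimal free resolution as an augmented projective resolution -/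
noncomputable def toAug {R : Type} [CommRing R] [IsLocalRing R] {M : Type} [AddCommGroup M]
    [Module R M] (F : MinFreeRes R M) : AugRes R M where
  Mo i := Fin (F.rk i) → R
  d := F.d
  aug := F.aug
  aug_surj := F.aug_surj
  exact_aug v := by
    rw [F.exact_aug v]
    exact ⟨fun ⟨u, hu⟩ => ⟨u, hu⟩, fun ⟨u, hu⟩ => ⟨u, hu⟩⟩
  exact i v := by
    rw [F.exact i v]
    exact ⟨fun ⟨u, hu⟩ => ⟨u, hu⟩, fun ⟨u, hu⟩ => ⟨u, hu⟩⟩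

section Sega

variable {R : Type} [CommRing R] [IsLocalRing R] {M : Type} [AddCommGroup M] [Module R M]

lemma MFR_dd (F : MinFreeRes R M) (i : ℕ) (u : Fin (F.rk (i+2)) → R) :
    F.d i (F.d (i+1) u) = 0 :=
  (F.exact i).apply_apply_eq_zero u

lemma mem_pw_iff (F : MinFreeRes R M) {s i : ℕ} {v : Fin (F.rk i) → R} :
    v ∈ F.pw s i ↔ v ∈ ((maximalIdeal R) ^ s • ⊤ : Submodule R (Fin (F.rk i) → R)) :=
  Iff.rfl

/-- elementwise ν-condition directly on a minimal free resolution -/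
def nuF (F : MinFreeRes R M) (j n : ℕ) : Prop :=
  ∀ z : Fin (F.rk (j+1)) → R, F.d j z ∈ F.pw (n+1) j →
    ∃ y, z - F.d (j+1) y ∈ F.pw n (j+1)

lemma nuF_iff_nuA (F : MinFreeRes R M) (j n : ℕ) :
    nuF F j n ↔ nuA (toAug F) j n := Iff.rfl

/-- Şega's criterion, elementwise: tail vanishing of the linear-part homology is
equivalent to the tail ν-conditions. -/
theorem tail_linH_iff_nu (F : MinFreeRes R M) (d : ℕ) :
    (∀ i, d < i → F.linHZero i) ↔ (∀ j, d ≤ j → ∀ n, nuF F j n) := by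
  constructor
  · intro hlin j hj n
    induction n with
    | zero =>
      intro z _
      refine ⟨0, ?_⟩
      rw [map_zero, sub_zero]
      exact mem_pow_zero_smul_top (maximalIdeal R) z
    | succ n ih =>
      intro z hz
      obtain ⟨y, hy⟩ := ih z (pow_smul_top_mono _ (by omega) hz)
      set z' : Fin (F.rk (j+1)) → R := z - F.d (j+1) y with hz'
      have hdz' : F.d j z' ∈ F.pw (n+2) j := by
        rw [hz', map_sub, MFR_dd, sub_zero]
        exact hz
      have hlin' := hlin (j+1) (by omega)
      rw [MinFreeRes.linHZero] at hlin'
      obtain ⟨y₂, _, hy₂⟩ := hlin' n z' hy hdz'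
      refine ⟨y + y₂, ?_⟩
      have he : z - F.d (j+1) (y + y₂) = z' - F.d (j+1) y₂ := by
        rw [map_add, hz']; abel
      rw [he]
      exact hy₂
  · intro hnu i hi
    rcases i with _ | j
    · omega
    have hj : d ≤ j := by omega
    rw [MinFreeRes.linHZero]
    intro s z hzs hzd
    obtain ⟨y₁, hy₁⟩ := hnu j hj (s+1) z hzd
    rcases s with _ | s'
    · refine ⟨y₁, mem_pow_zero_smul_top _ _, hy₁⟩
    · have hdy₁ : F.d (j+1) y₁ ∈ F.pw (s'+1) (j+1) := by
        have he : F.d (j+1) y₁ = z - (z - F.d (j+1) y₁) := by abel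
        rw [he]
        exact Submodule.sub_mem _ hzs (pow_smul_top_mono _ (by omega) hy₁)
      obtain ⟨y₂, hy₂⟩ := hnu (j+1) (by omega) s' y₁ hdy₁
      refine ⟨y₁ - F.d (j+2) y₂, hy₂, ?_⟩
      have he : z - F.d (j+1) (y₁ - F.d (j+2) y₂) = z - F.d (j+1) y₁ := by
        rw [map_sub, MFR_dd]; abel
      rw [he]
      exact hy₁

end Sega

section CrossRing

variable {R : Type} [CommRing R] [IsLocalRing R] (x : R)

variable [IsLocalRing (R ⧸ Ideal.span {x})]

lemma mk_mem_max_iff (hx : x ∈ maximalIdeal R) {r : R} :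
    Ideal.Quotient.mk (Ideal.span {x}) r ∈ maximalIdeal (R ⧸ Ideal.span {x}) ↔
      r ∈ maximalIdeal R := by
  constructor
  · intro h
    by_contra hr
    have hu : IsUnit r := by
      by_contra hnu
      exact hr ((mem_maximalIdeal r).mpr (mem_nonunits_iff.mpr hnu))
    exact (mem_nonunits_iff.mp ((mem_maximalIdeal _).mp h)) (hu.map _)
  · intro h
    rw [mem_maximalIdeal, mem_nonunits_iff]
    intro hu
    obtain ⟨b, hb⟩ := isUnit_iff_exists_inv.mp hu
    obtain ⟨s, rfl⟩ := Ideal.Quotient.mk_surjective b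
    rw [← map_mul, ← map_one (Ideal.Quotient.mk (Ideal.span {x})),
      Ideal.Quotient.mk_eq_mk_iff_sub_mem] at hb
    have hspan : Ideal.span {x} ≤ maximalIdeal R := by
      rw [Ideal.span_le, Set.singleton_subset_iff]; exact hx
    have h1 : (1 : R) ∈ maximalIdeal R := by
      have := Ideal.sub_mem _ (Ideal.mul_mem_right s _ h) (hspan hb)
      simpa using this
    exact (maximalIdeal.isMaximal R).ne_top (Ideal.eq_top_iff_one _ |>.mpr h1)

lemma mk_mem_max_iff' (hx : x ∈ maximalIdeal R) {r : R} :
    Ideal.Quotient.mk (Ideal.span {x}) r ∈ maximalIdeal (R ⧸ Ideal.span {x}) ↔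
      r ∈ maximalIdeal R := mk_mem_max_iff x hx

lemma max_quot_pow_eq (hx : x ∈ maximalIdeal R) (s : ℕ) :
    (maximalIdeal (R ⧸ Ideal.span {x})) ^ s =
      Ideal.map (Ideal.Quotient.mk (Ideal.span {x})) ((maximalIdeal R) ^ s) := by
  rw [Ideal.map_pow]
  congr 1
  ext q
  obtain ⟨r, rfl⟩ := Ideal.Quotient.mk_surjective q
  rw [Ideal.mem_map_iff_of_surjective _ Ideal.Quotient.mk_surjective]
  constructor
  · intro h
    exact ⟨r, (mk_mem_max_iff x hx).mp h, rfl⟩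
  · rintro ⟨p, hp, hpq⟩
    rw [← hpq]
    exact (mk_mem_max_iff x hx).mpr hp

lemma mk_mem_max_pow_iff (hx : x ∈ maximalIdeal R) {s : ℕ} {r : R} :
    Ideal.Quotient.mk (Ideal.span {x}) r ∈ (maximalIdeal (R ⧸ Ideal.span {x})) ^ s ↔
      ∃ p ∈ (maximalIdeal R) ^ s, ∃ c, r = p + c * x := by
  rw [max_quot_pow_eq x hx]
  rw [Ideal.mem_map_iff_of_surjective _ Ideal.Quotient.mk_surjective]
  constructor
  · rintro ⟨p, hp, hpr⟩
    rw [Ideal.Quotient.mk_eq_mk_iff_sub_mem] at hpr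
    obtain ⟨c, hc⟩ := Ideal.mem_span_singleton'.mp hpr
    exact ⟨p, hp, -c, by rw [neg_mul, hc]; ring⟩
  · rintro ⟨p, hp, c, rfl⟩
    refine ⟨p, hp, ?_⟩
    rw [Ideal.Quotient.mk_eq_mk_iff_sub_mem]
    exact Ideal.mem_span_singleton'.mpr ⟨-c, by ring⟩

/-- coordinatewise reduction mod `(x)` -/
def piv {n : ℕ} (v : Fin n → R) : Fin n → R ⧸ Ideal.span {x} :=
  fun k => Ideal.Quotient.mk (Ideal.span {x}) (v k)

lemma piv_surj {n : ℕ} (w : Fin n → R ⧸ Ideal.span {x}) : ∃ v, piv x v = w := by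
  refine ⟨fun k => (Ideal.Quotient.mk_surjective (w k)).choose, ?_⟩
  funext k
  exact (Ideal.Quotient.mk_surjective (w k)).choose_spec

lemma piv_add {n : ℕ} (a b : Fin n → R) : piv x (a + b) = piv x a + piv x b := by
  funext k; simp [piv]

lemma piv_sub {n : ℕ} (a b : Fin n → R) : piv x (a - b) = piv x a - piv x b := by
  funext k; simp [piv]

lemma piv_smul {n : ℕ} (r : R) (v : Fin n → R) :
    piv x (r • v) = (Ideal.Quotient.mk (Ideal.span {x}) r) • piv x v := by
  funext k
  simp [piv, smul_eq_mul]

lemma piv_x_smul {n : ℕ} (v : Fin n → R) : piv x (x • v) = 0 := by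
  funext k
  simp only [piv, Pi.smul_apply, smul_eq_mul, Pi.zero_apply]
  rw [Ideal.Quotient.eq_zero_iff_mem]
  exact Ideal.mul_mem_right _ _ (Ideal.mem_span_singleton_self x)

lemma piv_mem_pow_smul_top {n s : ℕ} {v : Fin n → R} (hx : x ∈ maximalIdeal R)
    (hv : v ∈ ((maximalIdeal R) ^ s • ⊤ : Submodule R (Fin n → R))) :
    piv x v ∈ ((maximalIdeal (R ⧸ Ideal.span {x})) ^ s • ⊤ :
      Submodule (R ⧸ Ideal.span {x}) (Fin n → R ⧸ Ideal.span {x})) := by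
  rw [mem_smul_top_pi] at hv ⊢
  intro k
  rw [max_quot_pow_eq x hx]
  exact Ideal.mem_map_of_mem _ (hv k)

variable (G : MinFreeRes (R ⧸ Ideal.span {x})
    ((R ⧸ Ideal.span {x}) ⧸ maximalIdeal (R ⧸ Ideal.span {x})))

/-- a lift of the differential of `G` to free modules over `R` -/
noncomputable def Dmap (i : ℕ) : (Fin (G.rk (i+1)) → R) →ₗ[R] (Fin (G.rk i) → R) :=
  Matrix.toLin' (fun k j =>
    Function.surjInv Ideal.Quotient.mk_surjective ((G.d i) (Pi.single j 1) k))

lemma toLin'_coord {n m : ℕ} (A : Matrix (Fin m) (Fin n) R) (v : Fin n → R) (k : Fin m) :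
    Matrix.toLin' A v k = ∑ j, A k j * v j := by
  simp [Matrix.toLin'_apply, Matrix.mulVec, dotProduct]

lemma piv_Dmap (i : ℕ) (v : Fin (G.rk (i+1)) → R) :
    piv x (Dmap x G i v) = G.d i (piv x v) := by
  have hrhs : G.d i (piv x v) = ∑ j, (Ideal.Quotient.mk (Ideal.span {x}) (v j)) •
      G.d i (Pi.single j 1) := by
    conv_lhs => rw [pi_eq_sum_single (piv x v)]
    rw [map_sum]
    exact Finset.sum_congr rfl fun j _ => by rw [map_smul]; rfl
  funext k
  rw [hrhs]
  show Ideal.Quotient.mk (Ideal.span {x}) (Dmap x G i v k) = _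
  rw [Dmap]; erw [toLin'_coord]; rw [map_sum]
  simp only [Finset.sum_apply, Pi.smul_apply, smul_eq_mul]
  refine Finset.sum_congr rfl fun j _ => ?_
  rw [map_mul, Function.surjInv_eq Ideal.Quotient.mk_surjective]
  ring

lemma Dmap_single_mem (hx : x ∈ maximalIdeal R) (i : ℕ) (j : Fin (G.rk (i+1))) :
    Dmap x G i (Pi.single j 1) ∈
      ((maximalIdeal R) • ⊤ : Submodule R (Fin (G.rk i) → R)) := by
  rw [mem_smul_top_pi]
  intro k
  rw [← mk_mem_max_iff x hx]
  have : Ideal.Quotient.mk (Ideal.span {x}) (Dmap x G i (Pi.single j 1) k) =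
      (G.d i) (piv x (Pi.single j 1)) k := by
    have := piv_Dmap x G i (Pi.single j 1)
    exact congrFun this k
  rw [this]
  have hpiv : piv x (Pi.single j 1) =
      (Pi.single j 1 : Fin (G.rk (i+1)) → R ⧸ Ideal.span {x}) := by
    funext k'
    by_cases h : k' = j <;> simp [piv, Pi.single_apply, h]
  rw [hpiv]
  have hmin := G.minimal i ⟨Pi.single j 1, rfl⟩
  exact (mem_smul_top_pi.mp hmin) k

lemma Dmap_mem (hx : x ∈ maximalIdeal R) (i s : ℕ) {v : Fin (G.rk (i+1)) → R}
    (hv : v ∈ ((maximalIdeal R) ^ s • ⊤ : Submodule R (Fin (G.rk (i+1)) → R))) :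
    Dmap x G i v ∈ ((maximalIdeal R) ^ (s+1) • ⊤ : Submodule R (Fin (G.rk i) → R)) :=
  apply_mem_pow_succ_smul_top _ (Dmap_single_mem x G hx i) hv

lemma DD_entry_mem_span (i : ℕ) (j : Fin (G.rk (i+2))) (k : Fin (G.rk i)) :
    Dmap x G i (Dmap x G (i+1) (Pi.single j 1)) k ∈ Ideal.span {x} := by
  rw [← Ideal.Quotient.eq_zero_iff_mem]
  have h1 : Ideal.Quotient.mk (Ideal.span {x}) (Dmap x G i (Dmap x G (i+1)
      (Pi.single j 1)) k) = (G.d i) (G.d (i+1) (piv x (Pi.single j 1))) k := by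
    have e1 := congrFun (piv_Dmap x G i (Dmap x G (i+1) (Pi.single j 1))) k
    have e2 := piv_Dmap x G (i+1) (Pi.single j 1)
    rw [← e2]
    exact e1
  rw [h1, (G.exact i).apply_apply_eq_zero]
  rfl

/-- a "homotopy-square" operator `S` with `x • S = D ∘ D` -/
noncomputable def Smap (i : ℕ) : (Fin (G.rk (i+2)) → R) →ₗ[R] (Fin (G.rk i) → R) :=
  Matrix.toLin' (fun k j =>
    (Ideal.mem_span_singleton'.mp (DD_entry_mem_span x G i j k)).choose)

lemma Smap_spec (i : ℕ) (j : Fin (G.rk (i+2))) (k : Fin (G.rk i)) :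
    (Ideal.mem_span_singleton'.mp (DD_entry_mem_span x G i j k)).choose * x =
      Dmap x G i (Dmap x G (i+1) (Pi.single j 1)) k :=
  (Ideal.mem_span_singleton'.mp (DD_entry_mem_span x G i j k)).choose_spec

lemma x_smul_Smap (i : ℕ) (v : Fin (G.rk (i+2)) → R) :
    x • Smap x G i v = Dmap x G i (Dmap x G (i+1) v) := by
  funext k
  have hrhs : Dmap x G i (Dmap x G (i+1) v) k =
      ∑ j, v j * (Dmap x G i (Dmap x G (i+1) (Pi.single j 1)) k) := by
    have := lin_apply_eq_sum ((Dmap x G i) ∘ₗ (Dmap x G (i+1))) v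
    simp only [LinearMap.comp_apply] at this
    rw [this]
    simp [Finset.sum_apply]
  rw [hrhs]
  simp only [Pi.smul_apply, smul_eq_mul]
  rw [Smap]; erw [toLin'_coord]; rw [Finset.mul_sum]
  refine Finset.sum_congr rfl fun j _ => ?_
  have := Smap_spec x G i j k
  linear_combination v j * this

lemma Smap_single_mem (hx : x ∈ maximalIdeal R)
    (hstrict : ∀ n : ℕ, ∀ r : R, x * r ∈ maximalIdeal R ^ (n + 1) → r ∈ maximalIdeal R ^ n)
    (i : ℕ) (j : Fin (G.rk (i+2))) :
    Smap x G i (Pi.single j 1) ∈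
      ((maximalIdeal R) • ⊤ : Submodule R (Fin (G.rk i) → R)) := by
  rw [mem_smul_top_pi]
  intro k
  have hDD : Dmap x G i (Dmap x G (i+1) (Pi.single j 1)) ∈
      ((maximalIdeal R) ^ 2 • ⊤ : Submodule R (Fin (G.rk i) → R)) := by
    have h1 : Dmap x G (i+1) (Pi.single j 1) ∈
        ((maximalIdeal R) ^ 1 • ⊤ : Submodule R (Fin (G.rk (i+1)) → R)) := by
      rw [pow_one]
      exact Dmap_single_mem x G hx (i+1) j
    exact Dmap_mem x G hx i 1 h1
  have hx2 : x * (Smap x G i (Pi.single j 1) k) ∈ (maximalIdeal R) ^ 2 := by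
    have := congrFun (x_smul_Smap x G i (Pi.single j 1)) k
    simp only [Pi.smul_apply, smul_eq_mul] at this
    rw [this]
    exact (mem_smul_top_pi.mp hDD) k
  have := hstrict 1 _ hx2
  rwa [pow_one] at this

lemma Smap_mem (hx : x ∈ maximalIdeal R)
    (hstrict : ∀ n : ℕ, ∀ r : R, x * r ∈ maximalIdeal R ^ (n + 1) → r ∈ maximalIdeal R ^ n)
    (i s : ℕ) {v : Fin (G.rk (i+2)) → R}
    (hv : v ∈ ((maximalIdeal R) ^ s • ⊤ : Submodule R (Fin (G.rk (i+2)) → R))) :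
    Smap x G i v ∈ ((maximalIdeal R) ^ (s+1) • ⊤ : Submodule R (Fin (G.rk i) → R)) :=
  apply_mem_pow_succ_smul_top _ (Smap_single_mem x G hx hstrict i) hv

lemma x_smul_cancel (hnzd : x ∈ nonZeroDivisors R) {n : ℕ} {v w : Fin n → R}
    (h : x • v = x • w) : v = w := by
  funext k
  have hk := congrFun h k
  simp only [Pi.smul_apply, smul_eq_mul] at hk
  have h0 : (v k - w k) * x = 0 := by linear_combination hk
  have h1 := (mul_right_mem_nonZeroDivisors_eq_zero_iff hnzd).mp h0
  exact sub_eq_zero.mp h1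

lemma Dmap_Smap_comm (hnzd : x ∈ nonZeroDivisors R) (i : ℕ) (v : Fin (G.rk (i+3)) → R) :
    Dmap x G i (Smap x G (i+1) v) = Smap x G i (Dmap x G (i+2) v) := by
  apply x_smul_cancel x hnzd
  rw [← map_smul, x_smul_Smap, x_smul_Smap]

/-- second ranks for the lifted two-term construction -/
abbrev rkB (i : ℕ) : ℕ :=
  match i with
  | 0 => 0
  | (i+1) => G.rk i

/-- the modules of the lifted resolution over `R` -/
abbrev CMod (i : ℕ) : Type := (Fin (G.rk i) → R) × (Fin (rkB x G i) → R)

/-- the differential of the lifted resolution -/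
noncomputable def dC : ∀ i, (CMod x G (i+1)) →ₗ[R] CMod x G i
  | 0 => ((Dmap x G 0) ∘ₗ (LinearMap.fst R _ _) + x • (LinearMap.snd R _ _)).prod 0
  | (i+1) => ((Dmap x G (i+1)) ∘ₗ (LinearMap.fst R _ _) + x • (LinearMap.snd R _ _)).prod
      (-((Smap x G i) ∘ₗ (LinearMap.fst R _ _) + (Dmap x G i) ∘ₗ (LinearMap.snd R _ _)))

lemma dC_fst (i : ℕ) (w : CMod x G (i+1)) :
    (dC x G i w).1 = Dmap x G i w.1 + x • w.2 := by
  cases i <;> rfl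

lemma dC_snd_succ (i : ℕ) (w : CMod x G (i+2)) :
    (dC x G (i+1) w).2 = -(Smap x G i w.1 + Dmap x G i w.2) := rfl

lemma piv_neg {n : ℕ} (v : Fin n → R) : piv x (-v) = - piv x v := by
  funext k; simp [piv]

lemma dC_dC (hnzd : x ∈ nonZeroDivisors R) (i : ℕ) (w : CMod x G (i+2)) :
    dC x G i (dC x G (i+1) w) = 0 := by
  have hfst : (dC x G i (dC x G (i+1) w)).1 = 0 := by
    rw [dC_fst, dC_fst, dC_snd_succ, map_add, map_smul, ← x_smul_Smap]
    module
  cases i with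
  | zero => exact Prod.ext hfst (Subsingleton.elim _ _)
  | succ j =>
    refine Prod.ext hfst ?_
    rw [dC_snd_succ, dC_fst, dC_snd_succ, map_add, map_neg, map_add, map_smul]
    rw [Dmap_Smap_comm x G hnzd]
    have hDD : Dmap x G j (Dmap x G (j+1) w.2) = x • Smap x G j w.2 :=
      (x_smul_Smap x G j w.2).symm
    rw [hDD]
    show -(Smap x G j (Dmap x G (j+2) w.1) + x • Smap x G j w.2 +
      -(Smap x G j (Dmap x G (j+2) w.1) + x • Smap x G j w.2)) = 0
    module

lemma dC_exact (hnzd : x ∈ nonZeroDivisors R) (i : ℕ) (w : CMod x G (i+1)) :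
    dC x G i w = 0 ↔ ∃ u, dC x G (i+1) u = w := by
  constructor
  · intro h0
    have h1 : Dmap x G i w.1 + x • w.2 = 0 := by
      rw [← dC_fst, h0]; rfl
    have h2 : G.d i (piv x w.1) = 0 := by
      rw [← piv_Dmap]
      have hD : Dmap x G i w.1 = -(x • w.2) := by
        rw [eq_neg_iff_add_eq_zero]; exact h1
      rw [hD, piv_neg, piv_x_smul, neg_zero]
    obtain ⟨cb, hcb⟩ := (G.exact i (piv x w.1)).mp h2
    obtain ⟨c, rfl⟩ := piv_surj x cb
    have h3 : piv x (w.1 - Dmap x G (i+1) c) = 0 := by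
      rw [piv_sub, piv_Dmap, hcb, sub_self]
    have h4 : ∀ k, (w.1 - Dmap x G (i+1) c) k ∈ Ideal.span {x} := by
      intro k
      rw [← Ideal.Quotient.eq_zero_iff_mem]
      have := congrFun h3 k
      exact this
    choose e he using fun k => Ideal.mem_span_singleton'.mp (h4 k)
    have h5 : w.1 = Dmap x G (i+1) c + x • e := by
      funext k
      have := he k
      simp only [Pi.sub_apply] at this
      simp only [Pi.add_apply, Pi.smul_apply, smul_eq_mul]
      linear_combination -this
    refine ⟨(c, e), ?_⟩
    have hfst : (dC x G (i+1) ((c, e) : CMod x G (i+2))).1 = w.1 := by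
      rw [dC_fst, h5]
    refine Prod.ext hfst ?_
    rw [dC_snd_succ]
    apply x_smul_cancel x hnzd
    have lhs : x • (-(Smap x G i c + Dmap x G i e)) =
        -(Dmap x G i (w.1)) := by
      rw [smul_neg, smul_add, x_smul_Smap, ← map_smul, ← map_add, ← h5]
    rw [lhs]
    have hDw : Dmap x G i w.1 = -(x • w.2) := by
      rw [eq_neg_iff_add_eq_zero]; exact h1
    rw [hDw, neg_neg]
  · rintro ⟨u, rfl⟩
    exact dC_dC x G hnzd i u

/-- the canonical map `(R/(x))/𝔪̄ → R/𝔪` -/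
noncomputable def e2 (hx : x ∈ maximalIdeal R) :
    ((R ⧸ Ideal.span {x}) ⧸ maximalIdeal (R ⧸ Ideal.span {x})) →+* (R ⧸ maximalIdeal R) :=
  Ideal.Quotient.lift (maximalIdeal (R ⧸ Ideal.span {x}))
    (Ideal.Quotient.lift (Ideal.span {x}) (Ideal.Quotient.mk (maximalIdeal R))
      (fun a ha => Ideal.Quotient.eq_zero_iff_mem.mpr
        ((Ideal.span_le.mpr (Set.singleton_subset_iff.mpr hx)) ha)))
    (fun q hq => by
      obtain ⟨r, rfl⟩ := Ideal.Quotient.mk_surjective q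
      rw [Ideal.Quotient.lift_mk]
      exact Ideal.Quotient.eq_zero_iff_mem.mpr ((mk_mem_max_iff x hx).mp hq))

lemma e2_mk_mk (hx : x ∈ maximalIdeal R) (r : R) :
    e2 x hx (Ideal.Quotient.mk _ (Ideal.Quotient.mk (Ideal.span {x}) r)) =
      Ideal.Quotient.mk (maximalIdeal R) r := by
  rw [e2, Ideal.Quotient.lift_mk, Ideal.Quotient.lift_mk]

lemma e2_inj (hx : x ∈ maximalIdeal R)
    {q : (R ⧸ Ideal.span {x}) ⧸ maximalIdeal (R ⧸ Ideal.span {x})}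
    (h : e2 x hx q = 0) : q = 0 := by
  obtain ⟨q', rfl⟩ := Ideal.Quotient.mk_surjective q
  obtain ⟨r, rfl⟩ := Ideal.Quotient.mk_surjective q'
  rw [e2_mk_mk] at h
  rw [Ideal.Quotient.eq_zero_iff_mem]
  exact (mk_mem_max_iff x hx).mpr (Ideal.Quotient.eq_zero_iff_mem.mp h)

/-- the augmentation of the lifted resolution -/
noncomputable def augA (hx : x ∈ maximalIdeal R) :
    (Fin (G.rk 0) → R) →ₗ[R] (R ⧸ maximalIdeal R) where
  toFun v := e2 x hx (G.aug (piv x v))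
  map_add' a b := by
    show e2 x hx (G.aug (piv x (a + b))) = _
    rw [piv_add, map_add, RingHom.map_add]
  map_smul' r v := by
    show e2 x hx (G.aug (piv x (r • v))) = _
    rw [piv_smul, map_smul]
    have hsm : (Ideal.Quotient.mk (Ideal.span {x}) r) • (G.aug (piv x v)) =
        (Ideal.Quotient.mk (maximalIdeal (R ⧸ Ideal.span {x}))
          (Ideal.Quotient.mk (Ideal.span {x}) r)) * (G.aug (piv x v)) := by
      rw [Algebra.smul_def, Ideal.Quotient.algebraMap_eq]
    rw [hsm, RingHom.map_mul, e2_mk_mk]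
    show _ = r • (e2 x hx (G.aug (piv x v)))
    rw [Algebra.smul_def, Ideal.Quotient.algebraMap_eq]

lemma augA_surj (hx : x ∈ maximalIdeal R) : Function.Surjective (augA x G hx) := by
  intro t
  obtain ⟨r, rfl⟩ := Ideal.Quotient.mk_surjective t
  obtain ⟨vb, hvb⟩ := G.aug_surj (Ideal.Quotient.mk _ (Ideal.Quotient.mk (Ideal.span {x}) r))
  obtain ⟨v, rfl⟩ := piv_surj x vb
  refine ⟨v, ?_⟩
  show e2 x hx (G.aug (piv x v)) = _
  rw [hvb, e2_mk_mk]

lemma augA_zero_iff (hx : x ∈ maximalIdeal R) (v : Fin (G.rk 0) → R) :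
    augA x G hx v = 0 ↔ G.aug (piv x v) = 0 := by
  constructor
  · intro h
    exact e2_inj x hx h
  · intro h
    show e2 x hx (G.aug (piv x v)) = 0
    rw [h, map_zero]

lemma lift_range_extract (i : ℕ) {a : Fin (G.rk i) → R}
    {cb : Fin (G.rk (i+1)) → R ⧸ Ideal.span {x}}
    (hcb : G.d i cb = piv x a) :
    ∃ (c : Fin (G.rk (i+1)) → R) (e : Fin (G.rk i) → R),
      a = Dmap x G i c + x • e := by
  obtain ⟨c, rfl⟩ := piv_surj x cb
  have h3 : piv x (a - Dmap x G i c) = 0 := by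
    rw [piv_sub, piv_Dmap, hcb, sub_self]
  have h4 : ∀ k, (a - Dmap x G i c) k ∈ Ideal.span {x} := by
    intro k
    rw [← Ideal.Quotient.eq_zero_iff_mem]
    exact congrFun h3 k
  choose e he using fun k => Ideal.mem_span_singleton'.mp (h4 k)
  refine ⟨c, e, ?_⟩
  funext k
  have := he k
  simp only [Pi.sub_apply] at this
  simp only [Pi.add_apply, Pi.smul_apply, smul_eq_mul]
  linear_combination -this

/-- the lifted construction, as an augmented projective resolution over `R` -/
noncomputable def CAug (hx : x ∈ maximalIdeal R) (hnzd : x ∈ nonZeroDivisors R) :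
    AugRes R (R ⧸ maximalIdeal R) where
  Mo := CMod x G
  d := dC x G
  aug := (augA x G hx) ∘ₗ (LinearMap.fst R _ _)
  aug_surj := fun t => by
    obtain ⟨v, hv⟩ := augA_surj x G hx t
    exact ⟨(v, 0), hv⟩
  exact_aug v := by
    constructor
    · intro h
      have h1 : G.aug (piv x v.1) = 0 := (augA_zero_iff x G hx v.1).mp h
      obtain ⟨cb, hcb⟩ := (G.exact_aug (piv x v.1)).mp h1
      obtain ⟨c, e, h5⟩ := lift_range_extract x G 0 hcb
      refine ⟨(c, e), ?_⟩
      refine Prod.ext ?_ (Subsingleton.elim _ _)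
      rw [dC_fst, ← h5]
    · rintro ⟨u, rfl⟩
      show augA x G hx (dC x G 0 u).1 = 0
      rw [dC_fst, augA_zero_iff, piv_add, piv_Dmap, piv_x_smul, add_zero]
      exact (G.exact_aug).apply_apply_eq_zero _
  exact := dC_exact x G hnzd

/-- the ν-condition for `G` implies the ν-condition for the lifted resolution `C` -/
lemma nuC_of_nuG (hx : x ∈ maximalIdeal R) (hnzd : x ∈ nonZeroDivisors R)
    (hstrict : ∀ n : ℕ, ∀ r : R, x * r ∈ maximalIdeal R ^ (n + 1) → r ∈ maximalIdeal R ^ n)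
    (j n : ℕ) (h : nuF G j n) : nuA (CAug x G hx hnzd) j n := by
  intro z hz
  have hz' : dC x G j z ∈ ((maximalIdeal R) ^ (n+1) • ⊤ :
      Submodule R (CMod x G j)) := hz
  have hz1 : Dmap x G j z.1 + x • z.2 ∈ ((maximalIdeal R) ^ (n+1) • ⊤ :
      Submodule R (Fin (G.rk j) → R)) := by
    have h' := (mem_smul_top_prod.mp hz').1
    erw [dC_fst] at h'; exact h'
  -- the G-side boundary is small
  have hGz : G.d j (piv x z.1) ∈ G.pw (n+1) j := by
    have e1 : G.d j (piv x z.1) = piv x (Dmap x G j z.1 + x • z.2) := by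
      rw [piv_add, piv_Dmap, piv_x_smul, add_zero]
    rw [e1]
    exact piv_mem_pow_smul_top x hx hz1
  obtain ⟨yb, hyb⟩ := h (piv x z.1) hGz
  -- z.1 - D c - x e = p small
  have hyb' : piv x z.1 - G.d (j+1) yb ∈ G.pw n (j+1) := hyb
  obtain ⟨c, rfl⟩ := piv_surj x yb
  -- coordinates : z.1 - D c ∈ 𝔪^n + (x)
  have h4 : ∀ k, ∃ p ∈ (maximalIdeal R)^n, ∃ u, (z.1 - Dmap x G (j+1) c) k = p + u * x := by
    intro k
    rw [← mk_mem_max_pow_iff x hx]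
    have e1 : Ideal.Quotient.mk (Ideal.span {x}) ((z.1 - Dmap x G (j+1) c) k) =
        (piv x z.1 - G.d (j+1) (piv x c)) k := by
      rw [← piv_Dmap, ← piv_sub]
      rfl
    rw [e1]
    exact (mem_smul_top_pi.mp hyb') k
  choose p hp u hu using h4
  have h5 : z.1 - Dmap x G (j+1) c = p + x • u := by
    funext k
    simp only [Pi.add_apply, Pi.smul_apply, smul_eq_mul]
    rw [hu k]; ring
  have hpmem : p ∈ ((maximalIdeal R) ^ n • ⊤ : Submodule R (Fin (G.rk (j+1)) → R)) :=
    mem_smul_top_pi.mpr hp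
  refine ⟨(c, u), ?_⟩
  apply mem_smul_top_prod.mpr
  constructor
  · show z.1 - (dC x G (j+1) (c, u)).1 ∈ _
    have e1 : z.1 - (Dmap x G (j+1) c + x • u) = p := by
      rw [sub_add_eq_sub_sub, h5, add_sub_cancel_right]
    rw [show z.1 - (dC x G (j+1) (c, u)).1 = z.1 - (Dmap x G (j+1) c + x • u) by
      rw [dC_fst], e1]
    exact hpmem
  · show z.2 - (dC x G (j+1) (c, u)).2 ∈ _
    rw [dC_snd_succ]
    -- b' := z.2 + S c + D u ;  x • b' ∈ 𝔪^{n+1}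
    have hb' : x • (z.2 - -(Smap x G j c + Dmap x G j u)) ∈
        ((maximalIdeal R) ^ (n+1) • ⊤ : Submodule R (Fin (G.rk j) → R)) := by
      have e2 : x • (z.2 - -(Smap x G j c + Dmap x G j u)) =
          (Dmap x G j z.1 + x • z.2) - Dmap x G j p := by
        rw [sub_neg_eq_add, smul_add, smul_add, x_smul_Smap, ← map_smul (Dmap x G j) x u]
        have e3 : Dmap x G j p = Dmap x G j z.1 - Dmap x G j (Dmap x G (j+1) c)
            - Dmap x G j (x • u) := by
          rw [← map_sub, ← map_sub]
          congr 1
          rw [h5, add_sub_cancel_right]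
        rw [e3]
        abel
      rw [e2]
      refine Submodule.sub_mem _ hz1 ?_
      exact pow_smul_top_mono _ (by omega) (Dmap_mem x G hx j n hpmem)
    rw [mem_smul_top_pi]
    intro k
    refine hstrict n _ ?_
    have := (mem_smul_top_pi.mp hb') k
    simpa using this

/-- the ν-condition for the lifted resolution `C` implies the ν-condition for `G` -/
lemma nuG_of_nuC (hx : x ∈ maximalIdeal R) (hnzd : x ∈ nonZeroDivisors R)
    (hstrict : ∀ n : ℕ, ∀ r : R, x * r ∈ maximalIdeal R ^ (n + 1) → r ∈ maximalIdeal R ^ n)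
    (j n : ℕ) (h : nuA (CAug x G hx hnzd) j n) : nuF G j n := by
  intro zb hzb
  obtain ⟨z, rfl⟩ := piv_surj x zb
  -- D j z = m + x u with m small
  have h4 : ∀ k, ∃ p ∈ (maximalIdeal R)^(n+1), ∃ u, (Dmap x G j z) k = p + u * x := by
    intro k
    rw [← mk_mem_max_pow_iff x hx]
    have e1 : Ideal.Quotient.mk (Ideal.span {x}) ((Dmap x G j z) k) =
        (G.d j (piv x z)) k := congrFun (piv_Dmap x G j z) k
    rw [e1]
    exact (mem_smul_top_pi.mp hzb) k
  choose m hm u hu using h4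
  have hmm : m ∈ ((maximalIdeal R) ^ (n+1) • ⊤ : Submodule R (Fin (G.rk j) → R)) :=
    mem_smul_top_pi.mpr hm
  have h5 : Dmap x G j z = m + x • u := by
    funext k
    simp only [Pi.add_apply, Pi.smul_apply, smul_eq_mul]
    rw [hu k]; ring
  -- the element (z, -u) of C is a ν-test element
  have hw : dC x G j ((z, -u) : CMod x G (j+1)) ∈
      ((maximalIdeal R) ^ (n+1) • ⊤ : Submodule R (CMod x G j)) := by
    rw [mem_smul_top_prod]
    constructor
    · rw [dC_fst]
      have e1 : Dmap x G j z + x • (-u) = m := by rw [h5, smul_neg]; abel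
      rw [e1]
      exact hmm
    · cases j with
      | zero => exact Submodule.zero_mem _
      | succ j' =>
        rw [dC_snd_succ]
        -- x • (S z - D u) = D m
        have e2 : x • (-(Smap x G j' z + Dmap x G j' (-u))) =
            - (Dmap x G j' m) := by
          rw [smul_neg]
          congr 1
          rw [smul_add, x_smul_Smap, map_neg, smul_neg,
            ← map_smul (Dmap x G j') x u, ← sub_eq_add_neg, ← map_sub]
          congr 1
          rw [h5, add_sub_cancel_right]
        rw [mem_smul_top_pi]
        intro k
        refine hstrict (n+1) _ ?_
        have hco := congrFun e2 k
        simp only [Pi.smul_apply, smul_eq_mul] at hco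
        rw [hco]
        have hDm : Dmap x G j' m ∈ ((maximalIdeal R) ^ (n+2) • ⊤ :
            Submodule R (Fin (G.rk j') → R)) := Dmap_mem x G hx j' (n+1) hmm
        have h6 := (mem_smul_top_pi.mp hDm) k
        simpa using Submodule.neg_mem _ h6
  obtain ⟨y, hy⟩ := h ((z, -u) : CMod x G (j+1)) hw
  refine ⟨piv x y.1, ?_⟩
  have hy' : ((z, -u) : CMod x G (j+1)) - dC x G (j+1) y ∈
      ((maximalIdeal R) ^ n • ⊤ : Submodule R (CMod x G (j+1))) := hy
  have hy1 : z - (Dmap x G (j+1) y.1 + x • y.2) ∈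
      ((maximalIdeal R) ^ n • ⊤ : Submodule R (Fin (G.rk (j+1)) → R)) := by
    have h' := (mem_smul_top_prod.mp hy').1
    rw [Prod.fst_sub] at h'
    erw [dC_fst] at h'; exact h'
  have e4 : piv x z - G.d (j+1) (piv x y.1) = piv x (z - (Dmap x G (j+1) y.1 + x • y.2)) := by
    rw [piv_sub, piv_add, piv_Dmap, piv_x_smul, add_zero]
  rw [show G.pw n (j+1) = ((maximalIdeal (R ⧸ Ideal.span {x})) ^ n • ⊤ :
    Submodule (R ⧸ Ideal.span {x}) (Fin (G.rk (j+1)) → R ⧸ Ideal.span {x})) from rfl]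
  rw [e4]
  exact piv_mem_pow_smul_top x hx hy1

end CrossRing

end Ld17

/-- if `x ∈ 𝔪 ∖ 𝔪²` is a strictly regular element (a nonzerodivisor with
`(𝔪^{n+1} : x) ⊆ 𝔪^n` for all `n`), then `ld_R(k) = ld_{R/(x)}(k)`: the linearity defects
computed from any minimal free resolution `F` of `k` over `R` and any minimal free
resolution `G` of `k` over `R/(x)` agree. -/
theorem ldefect_quotient_strictly_regular (R : Type) [CommRing R] [IsLocalRing R]
    [IsNoetherianRing R] (hm : maximalIdeal R ≠ ⊥)
    (x : R) (hx : x ∈ maximalIdeal R) (hx2 : x ∉ maximalIdeal R ^ 2)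
    (hnzd : x ∈ nonZeroDivisors R)
    (hstrict : ∀ n : ℕ, ∀ r : R, x * r ∈ maximalIdeal R ^ (n + 1) → r ∈ maximalIdeal R ^ n)
    [IsLocalRing (R ⧸ Ideal.span {x})]
    (F : MinFreeRes R (R ⧸ maximalIdeal R))
    (G : MinFreeRes (R ⧸ Ideal.span {x})
      ((R ⧸ Ideal.span {x}) ⧸ maximalIdeal (R ⧸ Ideal.span {x}))) :
    F.ldefect = G.ldefect := by
  have key : ∀ d : ℕ, (∀ i, d < i → F.linHZero i) ↔ (∀ i, d < i → G.linHZero i) := by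
    intro d
    rw [Ld17.tail_linH_iff_nu F d, Ld17.tail_linH_iff_nu G d]
    constructor
    · intro hF j hj n
      refine Ld17.nuG_of_nuC x G hx hnzd hstrict j n ?_
      refine Ld17.nuA_transfer (Ld17.CAug x G hx hnzd) (Ld17.toAug F) j n ?_
      exact (Ld17.nuF_iff_nuA F j n).mp (hF j hj n)
    · intro hG j hj n
      rw [Ld17.nuF_iff_nuA F j n]
      refine Ld17.nuA_transfer (Ld17.toAug F) (Ld17.CAug x G hx hnzd) j n ?_
      exact Ld17.nuC_of_nuG x G hx hnzd hstrict j n (hG j hj n)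
  show sSup _ = sSup _
  apply Ld17.sSup_image_eq_of_tail
  intro d
  have conv : ∀ (H : ℕ → Prop), (∀ i ∈ {i : ℕ | ¬ H i}, i ≤ d) ↔ (∀ i, d < i → H i) := by
    intro H
    constructor
    · intro h i hi
      by_contra hH
      have := h i hH
      omega
    · intro h i hi
      by_contra hle
      exact hi (h i (by omega))
  rw [conv, conv]
  exact key d
end
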